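/- If (D, A) is a {±1}-protocol with parameters (k, n, ℓ), then for every integer t with ℓ ≤ t ≤ n, 2^k ≤ (1 + ln(C(t,ℓ))) · (C(n,ℓ)/C(t,ℓ)) · 2^t, where C(a,b) denotes the binomial coefficient. -/

import Mathlib

noncomputable def Hsum (q : ℕ) : ℝ := ∑ i ∈ Finset.range q, (1:ℝ)/(i+1)

lemma Hsum_diff {b c : ℕ} (hcb : c ≤ b) : ((b:ℝ) - c) / b ≤ Hsum b - Hsum c := by
  rcases Nat.eq_zero_or_pos b with hb | hb
  · subst hb; interval_cases c; simp [Hsum]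
  have heq : Hsum c + ∑ i ∈ Finset.range b \ Finset.range c, (1:ℝ)/(i+1) = Hsum b := by
    simp only [Hsum]
    rw [← Finset.sum_sdiff (Finset.range_subset_range.2 hcb)]
    ring
  have hthis : Hsum b - Hsum c = ∑ i ∈ Finset.range b \ Finset.range c, (1:ℝ)/(i+1) := by
    linarith
  rw [hthis]
  have hcard : (Finset.range b \ Finset.range c).card = b - c := by
    rw [Finset.card_sdiff_of_subset (Finset.range_subset_range.2 hcb)]; simp
  calc ((b:ℝ) - c)/b = (((b:ℝ) - c)) * (1/b) := by ring
    _ = ∑ _i ∈ Finset.range b \ Finset.range c, (1/(b:ℝ)) := by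
        rw [Finset.sum_const, hcard, nsmul_eq_mul, Nat.cast_sub hcb]
    _ ≤ _ := by
        apply Finset.sum_le_sum
        intro i hi
        simp only [Finset.mem_sdiff, Finset.mem_range] at hi
        apply one_div_le_one_div_of_le (by positivity)
        have : i + 1 ≤ b := hi.1
        exact_mod_cast this

lemma Hsum_le (q : ℕ) (hq : 1 ≤ q) : Hsum q ≤ 1 + Real.log q := by
  induction q with
  | zero => omega
  | succ m ih =>
    rcases Nat.eq_zero_or_pos m with hm | hm
    · subst hm; simp [Hsum]
    have h1 : Hsum (m+1) = Hsum m + 1/(m+1) := by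
      simp [Hsum, Finset.sum_range_succ]
    have hx : (0:ℝ) < m := by exact_mod_cast hm
    have h2 : (1:ℝ)/(m+1) ≤ Real.log (m+1) - Real.log m := by
      rw [← Real.log_div (by positivity) hx.ne']
      rw [Real.le_log_iff_exp_le (by positivity)]
      have hmm : (m:ℝ)/(m+1) ≤ Real.exp (-(1/((m:ℝ)+1))) := by
        calc (m:ℝ)/(m+1) = -(1/((m:ℝ)+1)) + 1 := by field_simp; ring
        _ ≤ _ := Real.add_one_le_exp _
      rw [Real.exp_neg] at hmm
      have hep : (0:ℝ) < Real.exp (1/((m:ℝ)+1)) := Real.exp_pos _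
      have hgoal : Real.exp (1/((m:ℝ)+1)) ≤ ((m:ℝ)+1)/m := by
        rw [le_div_iff₀ hx]
        have h4 : (m:ℝ)/(m+1) * ((m+1) * Real.exp (1/((m:ℝ)+1))) ≤ (Real.exp (1/((m:ℝ)+1)))⁻¹ * ((m+1) * Real.exp (1/((m:ℝ)+1))) := by
          apply mul_le_mul_of_nonneg_right hmm (by positivity)
        calc Real.exp (1/((m:ℝ)+1)) * m = (m:ℝ)/(m+1) * ((m+1) * Real.exp (1/((m:ℝ)+1))) := by field_simp
          _ ≤ (Real.exp (1/((m:ℝ)+1)))⁻¹ * ((m+1) * Real.exp (1/((m:ℝ)+1))) := h4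
          _ = (m:ℝ)+1 := by field_simp
      calc Real.exp (1/((m:ℝ)+1)) ≤ ((m:ℝ)+1)/m := hgoal
        _ = _ := by push_cast; ring
    have h3 : Hsum m ≤ 1 + Real.log m := ih hm
    have : ((m:ℝ)+1) = ((m+1 : ℕ) : ℝ) := by push_cast; ring
    rw [h1]
    rw [← this]
    linarith

variable {n t ℓ : ℕ}

lemma deg_lemma (hℓt : ℓ ≤ t) (L : Finset (Fin n)) (hL : L.card = ℓ) :
    ((Finset.powersetCard t (Finset.univ : Finset (Fin n))).filter
      (fun T => L ⊆ T)).card = (n - ℓ).choose (t - ℓ) := by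
  have : ((Finset.powersetCard t (Finset.univ : Finset (Fin n))).filter
      (fun T => L ⊆ T)).card = (Finset.powersetCard (t - ℓ) Lᶜ).card := by
    apply Finset.card_bij' (fun T _ => T \ L) (fun S _ => S ∪ L)
    · intro T hT
      simp only [Finset.mem_filter, Finset.mem_powersetCard] at hT
      simp only [Finset.mem_powersetCard]
      constructor
      · intro x hx; simp only [Finset.mem_compl]
        exact (Finset.mem_sdiff.1 hx).2
      · rw [Finset.card_sdiff_of_subset hT.2, hT.1.2, hL]
    · intro S hS
      simp only [Finset.mem_powersetCard] at hS
      have hdisj : Disjoint S L := by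
        rw [Finset.disjoint_left]
        intro x hx hxL
        exact (Finset.mem_compl.1 (hS.1 hx)) hxL
      simp only [Finset.mem_filter, Finset.mem_powersetCard]
      refine ⟨⟨Finset.subset_univ _, ?_⟩, Finset.subset_union_right⟩
      rw [Finset.card_union_of_disjoint hdisj, hS.2, hL]
      omega
    · intro T hT
      simp only [Finset.mem_filter, Finset.mem_powersetCard] at hT
      rw [Finset.sdiff_union_of_subset hT.2]
    · intro S hS
      simp only [Finset.mem_powersetCard] at hS
      have hdisj : Disjoint S L := by
        rw [Finset.disjoint_left]
        intro x hx hxL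
        exact (Finset.mem_compl.1 (hS.1 hx)) hxL
      rw [Finset.union_sdiff_right, Finset.sdiff_eq_self_of_disjoint hdisj]
  rw [this, Finset.card_powersetCard, Finset.card_compl, hL, Fintype.card_fin]

lemma Hsum_nonneg (q : ℕ) : 0 ≤ Hsum q :=
  Finset.sum_nonneg (fun i _ => by positivity)

section
variable {n t ℓ : ℕ}

lemma double_count (hℓt : ℓ ≤ t) (X : Finset (Finset (Fin n))) (hX : ∀ L ∈ X, L.card = ℓ) :
    ∑ T ∈ Finset.powersetCard t (Finset.univ : Finset (Fin n)),
      (Finset.powersetCard ℓ T ∩ X).card = X.card * (n - ℓ).choose (t - ℓ) := by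
  have h1 : ∀ T : Finset (Fin n), (Finset.powersetCard ℓ T ∩ X) = X.filter (fun L => L ⊆ T) := by
    intro T
    ext L
    simp only [Finset.mem_inter, Finset.mem_powersetCard, Finset.mem_filter]
    constructor
    · rintro ⟨⟨h1, _⟩, h2⟩; exact ⟨h2, h1⟩
    · rintro ⟨h1, h2⟩; exact ⟨⟨h2, hX L h1⟩, h1⟩
  simp only [h1, Finset.card_filter]
  rw [Finset.sum_comm]
  trans (∑ _L ∈ X, (n - ℓ).choose (t - ℓ))
  · apply Finset.sum_congr rfl
    intro L hL
    rw [← Finset.card_filter]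
    exact deg_lemma hℓt L (hX L hL)
  · rw [Finset.sum_const, smul_eq_mul]

lemma cover_aux (hℓt : ℓ ≤ t) (htn : t ≤ n) :
    ∀ m (R : Finset (Finset (Fin n))), R.card ≤ m → (∀ L ∈ R, L.card = ℓ) →
    ∃ 𝒞 : Finset (Finset (Fin n)), (∀ T ∈ 𝒞, T.card = t) ∧ (∀ L ∈ R, ∃ T ∈ 𝒞, L ⊆ T) ∧
      (𝒞.card : ℝ) * ((n - ℓ).choose (t - ℓ)) ≤
        ∑ T ∈ Finset.powersetCard t (Finset.univ : Finset (Fin n)),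
          Hsum ((Finset.powersetCard ℓ T ∩ R).card) := by
  intro m
  induction m with
  | zero =>
    intro R hR _
    refine ⟨∅, by simp, ?_, ?_⟩
    · intro L hL
      rw [Finset.card_eq_zero.1 (Nat.le_zero.1 hR)] at hL
      simp at hL
    · simp only [Finset.card_empty, Nat.cast_zero, zero_mul]
      exact Finset.sum_nonneg (fun T _ => Hsum_nonneg _)
  | succ m ih =>
    intro R hR hRcard
    rcases Finset.eq_empty_or_nonempty R with hRe | hRne
    · subst hRe
      refine ⟨∅, by simp, by simp, ?_⟩
      simp only [Finset.card_empty, Nat.cast_zero, zero_mul]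
      exact Finset.sum_nonneg (fun T _ => Hsum_nonneg _)
    set Ts := Finset.powersetCard t (Finset.univ : Finset (Fin n)) with hTs
    have hTsne : Ts.Nonempty := by
      rw [hTs, Finset.powersetCard_nonempty]
      simpa using htn
    -- pick G maximizing coverage
    obtain ⟨G, hGTs, hGmax⟩ := Ts.exists_max_image
      (fun T => (Finset.powersetCard ℓ T ∩ R).card) hTsne
    set a := (Finset.powersetCard ℓ G ∩ R).card with ha
    -- a ≥ 1
    obtain ⟨L₀, hL₀⟩ := hRne
    obtain ⟨T₀, hLT₀, _, hT₀card⟩ := Finset.exists_subsuperset_card_eq (n := t)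
      (Finset.subset_univ L₀) (by rw [hRcard L₀ hL₀]; exact hℓt)
      (by simpa using htn)
    have hT₀Ts : T₀ ∈ Ts := by
      rw [hTs, Finset.mem_powersetCard]
      exact ⟨Finset.subset_univ _, hT₀card⟩
    have hL₀T₀ : L₀ ∈ Finset.powersetCard ℓ T₀ ∩ R := by
      rw [Finset.mem_inter, Finset.mem_powersetCard]
      exact ⟨⟨hLT₀, hRcard L₀ hL₀⟩, hL₀⟩
    have ha1 : 1 ≤ a := by
      have hmax := hGmax T₀ hT₀Ts
      have hpos : 1 ≤ (Finset.powersetCard ℓ T₀ ∩ R).card :=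
        Finset.card_pos.2 ⟨L₀, hL₀T₀⟩
      omega
    -- R' : remaining
    set R' := R.filter (fun L => ¬ L ⊆ G) with hR'
    have hR'sub : R' ⊆ R := Finset.filter_subset _ _
    have hRG : R \ R' = Finset.powersetCard ℓ G ∩ R := by
      ext L
      simp only [hR', Finset.mem_sdiff, Finset.mem_filter, Finset.mem_inter,
        Finset.mem_powersetCard, not_and, not_not]
      constructor
      · rintro ⟨h1, h2⟩; exact ⟨⟨h2 h1, hRcard L h1⟩, h1⟩
      · rintro ⟨⟨h1, _⟩, h2⟩; exact ⟨h2, fun _ => h1⟩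
    have hR'lt : R'.card < R.card := by
      have hsub : R' ⊂ R := by
        rw [Finset.ssubset_iff_of_subset hR'sub]
        obtain ⟨L₁, hL₁⟩ := Finset.card_pos.1 ha1
        rw [Finset.mem_inter, Finset.mem_powersetCard] at hL₁
        exact ⟨L₁, hL₁.2, by simp [hR', hL₁.1.1]⟩
      exact Finset.card_lt_card hsub
    obtain ⟨𝒞', h𝒞't, h𝒞'cov, h𝒞'bd⟩ := ih R' (by omega) (fun L hL => hRcard L (hR'sub hL))
    refine ⟨insert G 𝒞', ?_, ?_, ?_⟩
    · intro T hT
      rcases Finset.mem_insert.1 hT with rfl | hT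
      · rw [hTs, Finset.mem_powersetCard] at hGTs; exact hGTs.2
      · exact h𝒞't T hT
    · intro L hL
      by_cases hLG : L ⊆ G
      · exact ⟨G, Finset.mem_insert_self _ _, hLG⟩
      · obtain ⟨T, hT, hLT⟩ := h𝒞'cov L (by simp [hR', hL, hLG])
        exact ⟨T, Finset.mem_insert_of_mem hT, hLT⟩
    · -- the potential bound
      have hkey : ((n - ℓ).choose (t - ℓ) : ℝ) ≤
          (∑ T ∈ Ts, Hsum ((Finset.powersetCard ℓ T ∩ R).card)) -
          (∑ T ∈ Ts, Hsum ((Finset.powersetCard ℓ T ∩ R').card)) := by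
        rw [← Finset.sum_sub_distrib]
        have hterm : ∀ T ∈ Ts,
            (((Finset.powersetCard ℓ T ∩ R).card - (Finset.powersetCard ℓ T ∩ R').card : ℝ)) / a ≤
            Hsum ((Finset.powersetCard ℓ T ∩ R).card) - Hsum ((Finset.powersetCard ℓ T ∩ R').card) := by
          intro T hT
          set b := (Finset.powersetCard ℓ T ∩ R).card with hb
          set c := (Finset.powersetCard ℓ T ∩ R').card with hc
          have hcb : c ≤ b := Finset.card_le_card (Finset.inter_subset_inter le_rfl hR'sub)
          have hba : b ≤ a := hGmax T hT
          have h1 : ((b:ℝ) - c)/b ≤ Hsum b - Hsum c := Hsum_diff hcb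
          rcases Nat.eq_zero_or_pos b with hb0 | hb0
          · have hc0 : c = 0 := by omega
            rw [hb0, hc0]; simp
          · calc ((b:ℝ) - c)/a ≤ ((b:ℝ) - c)/b := by
                  apply div_le_div_of_nonneg_left _ _ _
                  · have : (c:ℝ) ≤ b := by exact_mod_cast hcb
                    linarith
                  · exact_mod_cast hb0
                  · exact_mod_cast hba
              _ ≤ _ := h1
        have hsum' : ∑ T ∈ Ts, (((Finset.powersetCard ℓ T ∩ R).card -
            (Finset.powersetCard ℓ T ∩ R').card : ℝ)) / a =
            (a : ℝ) * ((n - ℓ).choose (t - ℓ)) / a := by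
          rw [← Finset.sum_div]
          congr 1
          rw [Finset.sum_sub_distrib, ← Nat.cast_sum, ← Nat.cast_sum,
            double_count hℓt R hRcard,
            double_count hℓt R' (fun L hL => hRcard L (hR'sub hL))]
          have haR : a = R.card - R'.card := by
            rw [← Finset.card_sdiff_of_subset hR'sub, hRG]
          have hle : R'.card ≤ R.card := Finset.card_le_card hR'sub
          rw [haR]
          push_cast [Nat.cast_sub hle]
          ring
        calc ((n - ℓ).choose (t - ℓ) : ℝ) = (a : ℝ) * ((n - ℓ).choose (t - ℓ)) / a := by
              field_simp
          _ = ∑ T ∈ Ts, (((Finset.powersetCard ℓ T ∩ R).card -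
              (Finset.powersetCard ℓ T ∩ R').card : ℝ)) / a := hsum'.symm
          _ ≤ _ := Finset.sum_le_sum hterm
      have hcard : ((insert G 𝒞').card : ℝ) ≤ (𝒞'.card : ℝ) + 1 := by
        have := Finset.card_insert_le G 𝒞'
        exact_mod_cast this
      have hr0 : (0:ℝ) ≤ ((n - ℓ).choose (t - ℓ) : ℝ) := Nat.cast_nonneg _
      calc ((insert G 𝒞').card : ℝ) * ((n - ℓ).choose (t - ℓ))
          ≤ ((𝒞'.card : ℝ) + 1) * ((n - ℓ).choose (t - ℓ)) :=
            mul_le_mul_of_nonneg_right hcard hr0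
        _ = (𝒞'.card : ℝ) * ((n - ℓ).choose (t - ℓ)) + ((n - ℓ).choose (t - ℓ)) := by ring
        _ ≤ _ := by linarith [h𝒞'bd, hkey]

end

lemma cover_design {n t ℓ : ℕ} (hℓt : ℓ ≤ t) (htn : t ≤ n) :
    ∃ 𝒞 : Finset (Finset (Fin n)), (∀ T ∈ 𝒞, T.card = t) ∧
      (∀ L : Finset (Fin n), L.card = ℓ → ∃ T ∈ 𝒞, L ⊆ T) ∧
      (𝒞.card : ℝ) ≤ (1 + Real.log (t.choose ℓ)) * ((n.choose ℓ : ℝ) / (t.choose ℓ)) := by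
  set U := Finset.powersetCard ℓ (Finset.univ : Finset (Fin n)) with hU
  obtain ⟨𝒞, h1, h2, h3⟩ := cover_aux hℓt htn U.card U le_rfl
    (fun L hL => (Finset.mem_powersetCard.1 hL).2)
  refine ⟨𝒞, h1, ?_, ?_⟩
  · intro L hL
    exact h2 L (Finset.mem_powersetCard.2 ⟨Finset.subset_univ _, hL⟩)
  · -- evaluate the sum
    have hsum : ∑ T ∈ Finset.powersetCard t (Finset.univ : Finset (Fin n)),
        Hsum ((Finset.powersetCard ℓ T ∩ U).card) = (n.choose t : ℝ) * Hsum (t.choose ℓ) := by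
      rw [Finset.sum_congr rfl (fun T hT => ?_), Finset.sum_const, nsmul_eq_mul,
        Finset.card_powersetCard, Finset.card_univ, Fintype.card_fin]
      have hTU : Finset.powersetCard ℓ T ∩ U = Finset.powersetCard ℓ T := by
        apply Finset.inter_eq_left.2
        intro L hL
        rw [Finset.mem_powersetCard] at hL ⊢
        exact ⟨Finset.subset_univ _, hL.2⟩
      rw [hTU, Finset.card_powersetCard, (Finset.mem_powersetCard.1 hT).2]
    rw [hsum] at h3
    have hq : 0 < t.choose ℓ := Nat.choose_pos hℓt
    have hr : 0 < (n - ℓ).choose (t - ℓ) := Nat.choose_pos (by omega)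
    have hid : (n.choose t : ℝ) * (t.choose ℓ) = (n.choose ℓ) * ((n - ℓ).choose (t - ℓ)) := by
      exact_mod_cast congrArg Nat.cast (Nat.choose_mul (n := n) hℓt)
    have hqr : (0:ℝ) < (t.choose ℓ : ℝ) := by exact_mod_cast hq
    have hrr : (0:ℝ) < ((n - ℓ).choose (t - ℓ) : ℝ) := by exact_mod_cast hr
    have hlog : Hsum (t.choose ℓ) ≤ 1 + Real.log (t.choose ℓ) := Hsum_le _ hq
    have hchain : (𝒞.card : ℝ) ≤ Hsum (t.choose ℓ) * ((n.choose ℓ : ℝ) / (t.choose ℓ)) := by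
      rw [← mul_le_mul_iff_left₀ hrr]
      calc (𝒞.card : ℝ) * ((n - ℓ).choose (t - ℓ)) ≤ (n.choose t : ℝ) * Hsum (t.choose ℓ) := h3
        _ = Hsum (t.choose ℓ) * ((n.choose t : ℝ) * (t.choose ℓ)) / (t.choose ℓ) := by
            field_simp
        _ = Hsum (t.choose ℓ) * ((n.choose ℓ : ℝ) / (t.choose ℓ)) * ((n - ℓ).choose (t - ℓ)) := by
            rw [hid]; field_simp
    calc (𝒞.card : ℝ) ≤ Hsum (t.choose ℓ) * ((n.choose ℓ : ℝ) / (t.choose ℓ)) := hchain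
      _ ≤ (1 + Real.log (t.choose ℓ)) * ((n.choose ℓ : ℝ) / (t.choose ℓ)) := by
          apply mul_le_mul_of_nonneg_right hlog
          positivity

def IsSign {k : ℕ} (w : Fin k → ℝ) : Prop := ∀ i, w i = 1 ∨ w i = -1

lemma signs_finite (k : ℕ) : {w : Fin k → ℝ | IsSign w}.Finite := by
  apply Set.Finite.subset
    (Set.Finite.pi (fun _ : Fin k => (Set.finite_singleton (-1:ℝ)).insert 1))
  intro w hw
  simp only [Set.mem_pi, Set.mem_univ, forall_true_left]
  intro i
  rcases hw i with h | h <;> simp [h]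

lemma signs_inj (k : ℕ) : Set.InjOn (fun (w : Fin k → ℝ) (i : Fin k) => decide (w i = 1))
    {w | IsSign w} := by
  intro w hw w' hw' heq
  funext i
  have hthis := congrFun heq i
  simp only at hthis
  rcases hw i with h | h <;> rcases hw' i with h' | h' <;> rw [h, h'] <;>
    rw [h, h'] at hthis <;> norm_num at hthis

lemma card_signs_le (k : ℕ) (S : Set (Fin k → ℝ)) (hS : S ⊆ {w | IsSign w}) :
    S.ncard ≤ 2 ^ k := by
  have := Set.ncard_le_ncard_of_injOn (fun (w : Fin k → ℝ) (i : Fin k) => decide (w i = 1))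
    (fun a _ => Set.mem_univ _) ((signs_inj k).mono hS) (Set.finite_univ (α := Fin k → Bool))
  calc S.ncard ≤ (Set.univ : Set (Fin k → Bool)).ncard := this
    _ = 2 ^ k := by
      rw [Set.ncard_univ, Nat.card_eq_fintype_card, Fintype.card_fun]
      simp

lemma sign_span_bound : ∀ k : ℕ, ∀ V : Submodule ℝ (Fin k → ℝ),
    {w | IsSign w ∧ w ∈ V}.ncard ≤ 2 ^ (Module.finrank ℝ V) := by
  intro k
  induction k with
  | zero =>
    intro V
    have : {w : Fin 0 → ℝ | IsSign w ∧ w ∈ V}.ncard ≤ 2 ^ 0 := by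
      rw [pow_zero, Set.ncard_le_one_iff_eq (by
        apply Set.Finite.subset (signs_finite 0); intro w hw; exact hw.1)]
      rcases Set.eq_empty_or_nonempty {w : Fin 0 → ℝ | IsSign w ∧ w ∈ V} with h | ⟨x, hx⟩
      · left; exact h
      · right; exact ⟨x, Set.eq_singleton_iff_unique_mem.2 ⟨hx, fun y _ => Subsingleton.elim y x⟩⟩
    exact this.trans (Nat.pow_le_pow_right (by norm_num) (Nat.zero_le _))
  | succ k ih =>
    intro V
    by_cases hall : ∀ i, Pi.single i (1:ℝ) ∈ V
    · -- V = ⊤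
      have hVtop : V = ⊤ := by
        rw [eq_top_iff, ← (Pi.basisFun ℝ (Fin (k+1))).span_eq, Submodule.span_le]
        rintro x ⟨i, rfl⟩
        simpa [Pi.basisFun_apply] using hall i
      subst hVtop
      have hfr : Module.finrank ℝ (⊤ : Submodule ℝ (Fin (k+1) → ℝ)) = k + 1 := by
        rw [finrank_top]
        simp [Module.finrank_pi]
      rw [hfr]
      exact card_signs_le (k+1) _ (fun w hw => hw.1)
    · push_neg at hall
      obtain ⟨i, hi⟩ := hall
      set π : (Fin (k+1) → ℝ) →ₗ[ℝ] (Fin k → ℝ) := LinearMap.funLeft ℝ ℝ (i.succAbove) with hπ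
      have hker : ∀ v ∈ V, π v = 0 → v = 0 := by
        intro v hv hv0
        by_contra hvne
        have hvi : v i ≠ 0 := by
          intro hvi0
          apply hvne
          funext j
          rcases eq_or_ne i j with rfl | hij
          · exact hvi0
          · obtain ⟨l, hl⟩ := Fin.exists_succAbove_eq hij.symm
            have := congrFun hv0 l
            simpa [hπ, LinearMap.funLeft, hl] using this
        apply hi
        have hv_eq : Pi.single i (1:ℝ) = (v i)⁻¹ • v := by
          funext j
          rcases eq_or_ne i j with rfl | hij
          · simp [Pi.single_eq_same, inv_mul_cancel₀ hvi]
          · obtain ⟨l, hl⟩ := Fin.exists_succAbove_eq hij.symm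
            have := congrFun hv0 l
            simp only [hπ, LinearMap.funLeft_apply, Pi.zero_apply] at this
            rw [hl] at this
            simp [Pi.single_eq_of_ne hij.symm, this]
        rw [hv_eq]
        exact V.smul_mem _ hv
      have hinj : Set.InjOn π {w | IsSign w ∧ w ∈ V} := by
        intro v hv v' hv' heq
        have : v - v' = 0 := hker _ (V.sub_mem hv.2 hv'.2) (by rw [map_sub, heq, sub_self])
        exact sub_eq_zero.1 this
      have hmaps : ∀ w ∈ {w | IsSign w ∧ w ∈ V}, π w ∈ {w' | IsSign w' ∧ w' ∈ V.map π} := by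
        intro w hw
        constructor
        · intro j
          exact hw.1 (i.succAbove j)
        · exact ⟨w, hw.2, rfl⟩
      have hfin : {w' | IsSign w' ∧ w' ∈ V.map π}.Finite :=
        Set.Finite.subset (signs_finite k) (fun w hw => hw.1)
      calc {w | IsSign w ∧ w ∈ V}.ncard ≤ {w' | IsSign w' ∧ w' ∈ V.map π}.ncard :=
            Set.ncard_le_ncard_of_injOn π hmaps hinj hfin
        _ ≤ 2 ^ (Module.finrank ℝ (V.map π)) := ih (V.map π)
        _ ≤ 2 ^ (Module.finrank ℝ V) := by
            apply Nat.pow_le_pow_right (by norm_num)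
            exact Submodule.finrank_map_le π V

-- union bound
lemma ncard_cover {ι α : Type*} (m : ℕ) (𝒞 : Finset ι) (f : ι → Set α)
    (hfin : ∀ T ∈ 𝒞, (f T).Finite) (hm : ∀ T ∈ 𝒞, (f T).ncard ≤ m) :
    ∀ S : Set α, S ⊆ (⋃ T ∈ 𝒞, f T) → S.ncard ≤ 𝒞.card * m := by
  classical
  induction 𝒞 using Finset.induction with
  | empty =>
    intro S hS
    have : S = ∅ := Set.subset_empty_iff.1 (by simpa using hS)
    rw [this]
    simp
  | @insert a s hnot ih =>
    intro S hS
    have hfa : (f a).Finite := hfin a (Finset.mem_insert_self _ _)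
    have hrest : S \ f a ⊆ ⋃ T ∈ s, f T := by
      intro x hx
      have := hS hx.1
      simp only [Set.mem_iUnion] at this ⊢
      obtain ⟨T, hT, hxT⟩ := this
      rcases Finset.mem_insert.1 hT with rfl | hT
      · exact absurd hxT hx.2
      · exact ⟨T, hT, hxT⟩
    have h1 : (S ∩ f a).ncard ≤ m :=
      le_trans (Set.ncard_le_ncard Set.inter_subset_right hfa)
        (hm a (Finset.mem_insert_self _ _))
    have h2 : (S \ f a).ncard ≤ s.card * m :=
      ih (fun T hT => hfin T (Finset.mem_insert_of_mem hT))
        (fun T hT => hm T (Finset.mem_insert_of_mem hT)) _ hrest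
    have h3 : S.ncard ≤ (S ∩ f a).ncard + (S \ f a).ncard := by
      conv_lhs => rw [← Set.inter_union_diff S (f a)]
      exact Set.ncard_union_le _ _
    rw [Finset.card_insert_of_notMem hnot]
    calc S.ncard ≤ m + s.card * m := by omega
      _ = (s.card + 1) * m := by ring

/-- A `{±1}`-protocol with parameters `(k, n, ℓ)`. -/
def IsPMOneProtocol (k n ℓ : ℕ) (D : Matrix (Fin k) (Fin n) ℝ)
    (A : Matrix (Fin n) (Fin (2 ^ k)) ℝ) : Prop :=
  (∀ w : Fin k → ℝ, (∀ i, w i = 1 ∨ w i = -1) → ∃ j, ∀ i, (D * A) i j = w i) ∧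
  (∀ j, Set.ncard {i | A i j ≠ 0} ≤ ℓ)

/-- Improved general lower bound: a `{±1}`-protocol with parameters `(k,n,ℓ)` must satisfy,
for every `t` with `ℓ ≤ t ≤ n`,
`2^k ≤ (1 + ln (t choose ℓ)) · (n choose ℓ)/(t choose ℓ) · 2^t`. -/
theorem improved_lower_bound (k n ℓ t : ℕ) (D : Matrix (Fin k) (Fin n) ℝ)
    (A : Matrix (Fin n) (Fin (2 ^ k)) ℝ) (h : IsPMOneProtocol k n ℓ D A)
    (hℓt : ℓ ≤ t) (htn : t ≤ n) :
    (2 : ℝ) ^ k ≤ (1 + Real.log (Nat.choose t ℓ)) *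
      ((Nat.choose n ℓ : ℝ) / (Nat.choose t ℓ : ℝ)) * 2 ^ t := by
  classical
  obtain ⟨𝒞, h𝒞t, h𝒞cov, h𝒞bd⟩ := cover_design (n := n) hℓt htn
  -- the span sets
  set V : Finset (Fin n) → Submodule ℝ (Fin k → ℝ) :=
    fun T => Submodule.span ℝ ((fun x => fun i => D i x) '' (T : Set (Fin n))) with hV
  set f : Finset (Fin n) → Set (Fin k → ℝ) := fun T => {w | IsSign w ∧ w ∈ V T} with hf
  -- each f T has at most 2^t elements
  have hft : ∀ T ∈ 𝒞, (f T).ncard ≤ 2 ^ t := by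
    intro T hT
    have h1 : (f T).ncard ≤ 2 ^ Module.finrank ℝ (V T) := sign_span_bound k (V T)
    have h2 : Module.finrank ℝ (V T) ≤ t := by
      have himg : ((fun x => fun i => D i x) '' (T : Set (Fin n))) =
          ((T.image (fun x => fun i => D i x) : Finset (Fin k → ℝ)) : Set (Fin k → ℝ)) := by
        simp [Finset.coe_image]
      rw [hV]
      simp only
      show Module.finrank ℝ (Submodule.span ℝ ((fun x => fun i => D i x) '' (T : Set (Fin n)))) ≤ t
      rw [himg]
      calc Module.finrank ℝ (Submodule.span ℝ
            ((T.image (fun x => fun i => D i x) : Finset (Fin k → ℝ)) : Set (Fin k → ℝ)))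
          ≤ (T.image (fun x => fun i => D i x)).card := finrank_span_finset_le_card _
        _ ≤ T.card := Finset.card_image_le
        _ = t := h𝒞t T hT
    calc (f T).ncard ≤ 2 ^ Module.finrank ℝ (V T) := h1
      _ ≤ 2 ^ t := Nat.pow_le_pow_right (by norm_num) h2
  have hffin : ∀ T ∈ 𝒞, (f T).Finite := by
    intro T _
    exact Set.Finite.subset (signs_finite k) (fun w hw => hw.1)
  -- all sign vectors are covered
  have hcover : {w : Fin k → ℝ | IsSign w} ⊆ ⋃ T ∈ 𝒞, f T := by
    intro w hw
    obtain ⟨j, hj⟩ := h.1 w hw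
    -- support of column j
    set s : Set (Fin n) := {x | A x j ≠ 0} with hs
    have hsfin : s.Finite := Set.toFinite s
    set F : Finset (Fin n) := hsfin.toFinset with hF
    have hFcard : F.card ≤ ℓ := by
      rw [hF, ← Set.ncard_eq_toFinset_card s hsfin]
      exact h.2 j
    obtain ⟨L, hFL, _, hLcard⟩ := Finset.exists_subsuperset_card_eq (n := ℓ)
      (Finset.subset_univ F) hFcard (by simpa using hℓt.trans htn)
    obtain ⟨T, hT𝒞, hLT⟩ := h𝒞cov L hLcard
    simp only [Set.mem_iUnion]
    refine ⟨T, hT𝒞, ?_, ?_⟩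
    · exact hw
    · -- w ∈ V T
      have hw_eq : w = ∑ x ∈ F, A x j • (fun i => D i x) := by
        funext i
        rw [← hj i, Matrix.mul_apply]
        rw [Finset.sum_apply]
        rw [← Finset.sum_subset (Finset.subset_univ F)]
        · exact Finset.sum_congr rfl (fun x _ => by simp [mul_comm])
        · intro x _ hx
          have : A x j = 0 := by
            by_contra hne
            exact hx (by rw [hF, Set.Finite.mem_toFinset]; exact hne)
          simp [this]
      rw [hw_eq]
      apply Submodule.sum_mem
      intro x hx
      apply Submodule.smul_mem
      apply Submodule.subset_span
      exact ⟨x, hLT (hFL hx), rfl⟩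
  -- counting
  have hcount : 2 ^ k ≤ 𝒞.card * 2 ^ t := by
    have hle : {w : Fin k → ℝ | IsSign w}.ncard ≤ 𝒞.card * 2 ^ t :=
      ncard_cover (2 ^ t) 𝒞 f hffin hft _ hcover
    -- signs have exactly 2^k elements; we need ≥ 2^k
    have hge : 2 ^ k ≤ {w : Fin k → ℝ | IsSign w}.ncard := by
      have hinj : Set.InjOn (fun (b : Fin k → Bool) => (fun i => if b i then (1:ℝ) else -1))
          Set.univ := by
        intro b _ b' _ heq
        funext i
        have := congrFun heq i
        by_cases hb : b i <;> by_cases hb' : b' i <;> simp [hb, hb'] at this ⊢ <;> norm_num at this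
      have hmaps : ∀ b ∈ (Set.univ : Set (Fin k → Bool)),
          (fun i => if b i then (1:ℝ) else -1) ∈ {w : Fin k → ℝ | IsSign w} := by
        intro b _ i
        by_cases hb : b i <;> simp [hb, IsSign]
      have := Set.ncard_le_ncard_of_injOn _ hmaps hinj (signs_finite k)
      calc 2 ^ k = (Set.univ : Set (Fin k → Bool)).ncard := by
            rw [Set.ncard_univ, Nat.card_eq_fintype_card, Fintype.card_fun]
            simp
        _ ≤ _ := this
    omega
  -- to the reals
  have hcast : (2:ℝ) ^ k ≤ (𝒞.card : ℝ) * 2 ^ t := by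
    have := hcount
    calc (2:ℝ) ^ k = ((2 ^ k : ℕ) : ℝ) := by push_cast; ring
      _ ≤ ((𝒞.card * 2 ^ t : ℕ) : ℝ) := by exact_mod_cast this
      _ = (𝒞.card : ℝ) * 2 ^ t := by push_cast; ring
  calc (2:ℝ) ^ k ≤ (𝒞.card : ℝ) * 2 ^ t := hcast
    _ ≤ (1 + Real.log (t.choose ℓ)) * ((n.choose ℓ : ℝ) / (t.choose ℓ)) * 2 ^ t := by
        apply mul_le_mul_of_nonneg_right h𝒞bd (by positivity)
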